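/- Let V be a real normed vector space and let p, q ∈ V be nonzero vectors such that the norm function x ↦ ‖x‖ is Fréchet differentiable at −p and at −q. Let v₁, …, v_k ∈ V satisfy v₁ + … + v_k = 0. Then there exists an index j ∈ {1, …, k} such that ‖t • v_j − p‖ + ‖t • v_j − q‖ ≥ ‖p‖ + ‖q‖ for all t ≥ 0. -/

import Mathlib

open Set

/-- Convexity of `t ↦ ‖t • w - a‖` on ℝ. -/
lemma convexOn_norm_smul_sub {V : Type*} [NormedAddCommGroup V] [NormedSpace ℝ V]
    (w a : V) : ConvexOn ℝ Set.univ (fun t : ℝ => ‖t • w - a‖) := by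
  have h := (convexOn_univ_norm (E := V)).comp_affineMap (AffineMap.lineMap (-a) (w - a))
  convert h.subset (by simp) convex_univ using 1
  · rfl
  · rfl
  · rfl
  · rfl
  funext t
  simp [AffineMap.lineMap_apply, smul_sub, sub_eq_add_neg, add_comm]

/-- **Key step in Case 3 for saddle surfaces.** If `p, q` are nonzero vectors of a real
normed space whose norm is Fréchet differentiable at `−p` and `−q`, and `v₁ + … + v_k = 0`,
then along some direction `v_j` the function `x ↦ ‖x − p‖ + ‖x − q‖` never goes below its
value at the origin: `‖t • v_j − p‖ + ‖t • v_j − q‖ ≥ ‖p‖ + ‖q‖` for all `t ≥ 0`. -/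
theorem exists_direction_sum_dist_ge
    {V : Type*} [NormedAddCommGroup V] [NormedSpace ℝ V]
    (p q : V) (hp : p ≠ 0) (hq : q ≠ 0)
    (hdp : DifferentiableAt ℝ (fun x : V => ‖x‖) (-p))
    (hdq : DifferentiableAt ℝ (fun x : V => ‖x‖) (-q))
    (k : ℕ) (hk : 0 < k) (v : Fin k → V) (hsum : ∑ i, v i = 0) :
    ∃ j : Fin k, ∀ t : ℝ, 0 ≤ t →
      ‖p‖ + ‖q‖ ≤ ‖t • v j - p‖ + ‖t • v j - q‖ := by
  set L : V →L[ℝ] ℝ := fderiv ℝ (fun x : V => ‖x‖) (-p) + fderiv ℝ (fun x : V => ‖x‖) (-q)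
    with hL
  have hsumL : ∑ i, L (v i) = 0 := by
    rw [← map_sum, hsum, map_zero]
  have hex : ∃ j : Fin k, 0 ≤ L (v j) := by
    by_contra h
    push_neg at h
    have : ∑ i, L (v i) < 0 := by
      apply Finset.sum_neg (fun i _ => h i) (by simpa using Finset.univ_nonempty_iff.2 ⟨⟨0, hk⟩⟩)
    linarith
  obtain ⟨j, hj⟩ := hex
  refine ⟨j, fun t ht => ?_⟩
  set g : ℝ → ℝ := fun t => ‖t • v j - p‖ + ‖t • v j - q‖ with hg
  have hgc : ConvexOn ℝ Set.univ g :=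
    (convexOn_norm_smul_sub (v j) p).add (convexOn_norm_smul_sub (v j) q)
  -- derivative of g at 0
  have hsm : ∀ a : V, HasDerivAt (fun t : ℝ => t • v j - a) (v j) 0 := by
    intro a
    simpa using ((hasDerivAt_id (0:ℝ)).smul_const (v j)).sub_const a
  have hd1 : HasDerivAt (fun t : ℝ => ‖t • v j - p‖)
      (fderiv ℝ (fun x : V => ‖x‖) (-p) (v j)) 0 := by
    exact (show HasFDerivAt (fun x : V => ‖x‖) (fderiv ℝ (fun x : V => ‖x‖) (-p))
      ((0:ℝ) • v j - p) by simpa using hdp.hasFDerivAt).comp_hasDerivAt 0 (hsm p)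
  have hd2 : HasDerivAt (fun t : ℝ => ‖t • v j - q‖)
      (fderiv ℝ (fun x : V => ‖x‖) (-q) (v j)) 0 := by
    exact (show HasFDerivAt (fun x : V => ‖x‖) (fderiv ℝ (fun x : V => ‖x‖) (-q))
      ((0:ℝ) • v j - q) by simpa using hdq.hasFDerivAt).comp_hasDerivAt 0 (hsm q)
  have hdg : HasDerivAt g (L (v j)) 0 := by
    exact hd1.add hd2
  rcases eq_or_lt_of_le ht with h0 | h0
  · simp [g, ← h0]
  · have := hgc.le_slope_of_hasDerivWithinAt_Ioi (mem_univ (0:ℝ)) (mem_univ t) h0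
      (hdg.hasDerivWithinAt)
    rw [slope_def_field] at this
    have hg0 : g 0 = ‖p‖ + ‖q‖ := by simp [g]
    have : 0 ≤ (g t - g 0) / (t - 0) := le_trans hj this
    have ht' : 0 < t - 0 := by linarith
    have h2 : 0 * (t - 0) ≤ g t - g 0 := (le_div_iff₀ ht').mp this
    show ‖p‖ + ‖q‖ ≤ g t
    linarith
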